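/- Let k ≥ 1 and let ℓ be an integer with gcd(ℓ, k+2) = 1; set s := i·exp(πiℓ/(2(k+2))) ∈ ℂ and [n] := (s^{2n} − s^{−2n})/(s² − s^{−2}). Let S be the (k+1)×(k+1) complex matrix with rows and columns indexed by a, b ∈ {0, 1, ..., k} and entries S_{a,b} = (−1)^{a+b}·[(a+1)(b+1)]. If k is odd and ℓ is odd, then the rank of S equals (k+1)/2; in all other cases S has full rank k+1, i.e. S is invertible. (Hence the braided category C^br_{k,ℓ}, whose S-matrix this is, is modular exactly when k is even or ℓ is even.) -/

import Mathlib

open Finset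

lemma aux_geom (x : ℂ) (M : ℕ) (hx : x ^ M = 1) :
    ∑ j ∈ Finset.range M, x ^ j = if x = 1 then (M : ℂ) else 0 := by
  split_ifs with h
  · simp [h]
  · rw [geom_sum_eq h, hx, sub_self, zero_div]

lemma aux_reflect (q : ℂ) (hq : q ≠ 0) (M P : ℕ) (_hPM : P ≤ M)
    (hM : q ^ (M : ℤ) = 1) (r : ℤ) :
    ∑ j ∈ Finset.range P, q ^ (-(r * ((j : ℤ) + 1)))
      = ∑ j ∈ Finset.range P, q ^ (r * ((M : ℤ) - P + j)) := by
  rw [← Finset.sum_range_reflect (fun j => q ^ (r * ((M : ℤ) - P + j))) P]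
  apply Finset.sum_congr rfl
  intro j hj
  rw [Finset.mem_range] at hj
  have h1 : ((P - 1 - j : ℕ) : ℤ) = (P : ℤ) - 1 - j := by omega
  rw [h1]
  have h2 : r * ((M : ℤ) - P + ((P : ℤ) - 1 - j)) = r * (M : ℤ) + (-(r * ((j : ℤ) + 1))) := by ring
  rw [h2, zpow_add₀ hq, mul_comm r (M:ℤ), zpow_mul, hM, one_zpow, one_mul]

lemma aux_Tdeg (q : ℂ) (hq : q ≠ 0) (m h : ℕ) (hm : m = 2 * h + 1)
    (hqm : q ^ (m : ℤ) = 1) (r : ℤ) :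
    ∑ j ∈ Finset.range h, (q ^ (r * ((j : ℤ) + 1)) + q ^ (-(r * ((j : ℤ) + 1))))
      = (if q ^ r = 1 then (m : ℂ) else 0) - 1 := by
  have hx : (q ^ r) ^ m = 1 := by
    rw [← zpow_natCast, ← zpow_mul, mul_comm, zpow_mul, hqm, one_zpow]
  have key := aux_geom (q ^ r) m hx
  have e1 : ∀ j : ℕ, (q ^ r) ^ j = q ^ (r * (j : ℤ)) := by
    intro j; rw [← zpow_natCast, ← zpow_mul]
  have hm' : m = (h + 1) + h := by omega
  rw [hm'] at key
  rw [Finset.sum_range_add, Finset.sum_range_succ'] at key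
  simp only [e1] at key
  rw [Finset.sum_add_distrib, aux_reflect q hq m h (by omega) hqm r]
  have hmh : (m : ℤ) - h = (h : ℤ) + 1 := by omega
  rw [hmh]
  have c1 : ∑ j ∈ Finset.range h, q ^ (r * ((h : ℤ) + 1 + j))
      = ∑ j ∈ Finset.range h, q ^ (r * ((h + 1 + j : ℕ) : ℤ)) := by
    exact Finset.sum_congr rfl fun j _ => by norm_cast
  have c2 : ∑ j ∈ Finset.range h, q ^ (r * ((j : ℤ) + 1))
      = ∑ j ∈ Finset.range h, q ^ (r * ((j + 1 : ℕ) : ℤ)) := by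
    exact Finset.sum_congr rfl fun j _ => by norm_cast
  rw [c1, c2]
  simp only [Nat.cast_zero, mul_zero, zpow_zero] at key
  rw [show ((m:ℂ)) = ((h + 1 + h : ℕ) : ℂ) by rw [← hm'], ← key]
  ring

lemma aux_Tnondeg (q : ℂ) (hq : q ≠ 0) (p : ℕ) (hqm : q ^ ((p + 1 : ℕ) : ℤ) = -1) (r : ℤ) :
    ∑ j ∈ Finset.range p, (q ^ (r * ((j : ℤ) + 1)) + q ^ (-(r * ((j : ℤ) + 1))))
      = (if q ^ r = 1 then (2 * (p + 1) : ℂ) else 0) - 1 - (-1) ^ r := by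
  set m : ℕ := p + 1 with hmdef
  have hq2m : q ^ ((2 * m : ℕ) : ℤ) = 1 := by
    have hc : ((2 * m : ℕ) : ℤ) = (m : ℤ) * 2 := by push_cast; ring
    rw [hc, zpow_mul, hqm]
    norm_num
  have hx : (q ^ r) ^ (2 * m) = 1 := by
    rw [← zpow_natCast, ← zpow_mul, mul_comm, zpow_mul, hq2m, one_zpow]
  have key := aux_geom (q ^ r) (2 * m) hx
  have e1 : ∀ j : ℕ, (q ^ r) ^ j = q ^ (r * (j : ℤ)) := by
    intro j; rw [← zpow_natCast, ← zpow_mul]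
  have hm' : 2 * m = (p + 1 + 1) + p := by omega
  rw [hm', Finset.sum_range_add, Finset.sum_range_succ, Finset.sum_range_succ'] at key
  simp only [e1] at key
  have hfm : q ^ (r * ((p + 1 : ℕ) : ℤ)) = (-1) ^ r := by
    rw [mul_comm, zpow_mul, hqm]
  rw [Finset.sum_add_distrib, aux_reflect q hq (2 * m) p (by omega) hq2m r]
  have c1 : ∑ j ∈ Finset.range p, q ^ (r * (((2 * m : ℕ) : ℤ) - p + j))
      = ∑ j ∈ Finset.range p, q ^ (r * ((p + 1 + 1 + j : ℕ) : ℤ)) := by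
    exact Finset.sum_congr rfl fun j _ => by
      congr 1
      push_cast [hmdef]
      ring
  have c2 : ∑ j ∈ Finset.range p, q ^ (r * ((j : ℤ) + 1))
      = ∑ j ∈ Finset.range p, q ^ (r * ((j + 1 : ℕ) : ℤ)) := by
    exact Finset.sum_congr rfl fun j _ => by norm_cast
  rw [c1, c2]
  simp only [Nat.cast_zero, mul_zero, zpow_zero] at key
  rw [hfm] at key
  have hcast : ((p + 1 + 1 + p : ℕ) : ℂ) = 2 * ((p : ℂ) + 1) := by push_cast; ring
  rw [hcast] at key
  linear_combination key

open Complex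

lemma aux_q_setup (k : ℕ) (ℓ : ℤ) (hl : Int.gcd ℓ ((k : ℤ) + 2) = 1) (s : ℂ)
    (hs : s = Complex.I * Complex.exp ((Real.pi : ℂ) * Complex.I * (ℓ : ℂ) / (2 * ((k : ℂ) + 2)))) :
    s ≠ 0 ∧ (s ^ 2) ^ ((k + 2 : ℕ) : ℤ) = (-1) ^ k * (-1) ^ ℓ ∧
      (∀ r : ℤ, ((s ^ 2) ^ (2 * r) = 1 ↔ ((k : ℤ) + 2) ∣ r)) := by
  set w : ℂ := (Real.pi : ℂ) * Complex.I * (ℓ : ℂ) / (2 * ((k : ℂ) + 2)) with hw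
  have hkne : ((k : ℂ) + 2) ≠ 0 := by
    intro h
    have : (k : ℂ) = -2 := by linear_combination h
    have h2 := congrArg Complex.re this
    simp [Complex.ofReal_re] at h2
    norm_num at h2
    nlinarith [h2, Nat.cast_nonneg (α := ℝ) k]
  have hpi : (Real.pi : ℂ) ≠ 0 := by
    simpa using Complex.ofReal_ne_zero.mpr Real.pi_ne_zero
  have hs0 : s ≠ 0 := by
    rw [hs]
    exact mul_ne_zero Complex.I_ne_zero (Complex.exp_ne_zero _)
  have hsq : s ^ 2 = -Complex.exp (2 * w) := by
    rw [hs, mul_pow, Complex.I_sq, ← Complex.exp_nat_mul]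
    norm_num
  refine ⟨hs0, ?_, ?_⟩
  · rw [zpow_natCast, hsq, neg_pow, ← Complex.exp_nat_mul]
    have harg : ((k + 2 : ℕ) : ℂ) * (2 * w) = (ℓ : ℂ) * ((Real.pi : ℂ) * Complex.I) := by
      rw [hw]
      field_simp
      push_cast; ring
    rw [harg, Complex.exp_int_mul, Complex.exp_pi_mul_I]
    have : (-1 : ℂ) ^ (k + 2) = (-1) ^ k := by
      rw [pow_add]; norm_num
    rw [this]
  · intro r
    have hq2 : (s ^ 2) ^ (2 * r) = Complex.exp ((r : ℂ) * (4 * w)) := by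
      rw [zpow_mul, hsq]
      have h1 : ((-Complex.exp (2 * w)) ^ (2 : ℤ)) = Complex.exp (4 * w) := by
        rw [show ((2:ℤ)) = ((2:ℕ):ℤ) by norm_num, zpow_natCast, neg_sq, sq, ← Complex.exp_add]
        congr 1
        ring
      rw [h1, ← Complex.exp_int_mul]
    rw [hq2, Complex.exp_eq_one_iff]
    have h4w : 4 * w = 2 * (Real.pi : ℂ) * Complex.I * ℓ / ((k : ℂ) + 2) := by
      rw [hw]; field_simp; ring
    constructor
    · rintro ⟨n, hn⟩
      rw [h4w] at hn
      have key : ((r * ℓ : ℤ) : ℂ) = ((n * ((k : ℤ) + 2) : ℤ) : ℂ) := by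
        have h2pi : (2 * (Real.pi : ℂ) * Complex.I) ≠ 0 :=
          mul_ne_zero (mul_ne_zero two_ne_zero hpi) Complex.I_ne_zero
        apply mul_left_cancel₀ h2pi
        field_simp at hn
        push_cast
        linear_combination (2 * (Real.pi : ℂ) * Complex.I) * hn
      have key2 : r * ℓ = n * ((k : ℤ) + 2) := by exact_mod_cast key
      have hco : IsCoprime ((k : ℤ) + 2) ℓ := by
        rw [Int.isCoprime_iff_gcd_eq_one, Int.gcd_comm]
        exact hl
      exact hco.dvd_of_dvd_mul_right ⟨n, by linarith [key2]⟩
    · rintro ⟨t, ht⟩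
      refine ⟨t * ℓ, ?_⟩
      rw [h4w, ht]
      push_cast
      field_simp
lemma aux_expand (q : ℂ) (hq : q ≠ 0) (x y : ℤ) :
    (q ^ x - q ^ (-x)) * (q ^ y - q ^ (-y))
      = (q ^ (x + y) + q ^ (-(x + y))) - (q ^ (x - y) + q ^ (-(x - y))) := by
  simp only [zpow_add₀ hq, zpow_sub₀ hq, zpow_neg, neg_add, neg_sub]
  field_simp
  ring

lemma aux_gram_deg (q : ℂ) (hq : q ≠ 0) (m h : ℕ) (hm : m = 2 * h + 1)
    (hqm : q ^ (m : ℤ) = 1) (hchar : ∀ r : ℤ, q ^ r = 1 ↔ (m : ℤ) ∣ r)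
    (α γ : ℤ) (hα1 : 1 ≤ α) (hα2 : α ≤ h) (hγ1 : 1 ≤ γ) (hγ2 : γ ≤ h) :
    ∑ j ∈ Finset.range h,
      (q ^ (α * ((j : ℤ) + 1)) - q ^ (-(α * ((j : ℤ) + 1)))) *
        (q ^ (γ * ((j : ℤ) + 1)) - q ^ (-(γ * ((j : ℤ) + 1))))
      = if α = γ then -(m : ℂ) else 0 := by
  have step : ∀ j : ℕ,
      (q ^ (α * ((j : ℤ) + 1)) - q ^ (-(α * ((j : ℤ) + 1)))) *
        (q ^ (γ * ((j : ℤ) + 1)) - q ^ (-(γ * ((j : ℤ) + 1))))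
      = (q ^ ((α + γ) * ((j : ℤ) + 1)) + q ^ (-((α + γ) * ((j : ℤ) + 1))))
        - (q ^ ((α - γ) * ((j : ℤ) + 1)) + q ^ (-((α - γ) * ((j : ℤ) + 1)))) := by
    intro j
    rw [aux_expand q hq]
    congr 3 <;> ring
  rw [Finset.sum_congr rfl fun j _ => step j, Finset.sum_sub_distrib,
    aux_Tdeg q hq m h hm hqm (α + γ), aux_Tdeg q hq m h hm hqm (α - γ)]
  have h1 : ¬ (q ^ (α + γ) = 1) := by
    rw [hchar]; intro hd
    have := Int.le_of_dvd (by omega) hd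
    omega
  have h2 : (q ^ (α - γ) = 1) ↔ α = γ := by
    rw [hchar]
    constructor
    · intro hd
      by_contra hne
      have h0 : 0 < |α - γ| := abs_pos.mpr (sub_ne_zero.mpr hne)
      have hle := Int.le_of_dvd h0 ((dvd_abs _ _).mpr hd)
      have habs : |α - γ| ≤ (h : ℤ) - 1 := abs_le.mpr ⟨by omega, by omega⟩
      omega
    · intro h; simp [h]
  rw [if_neg h1]
  by_cases hag : α = γ
  · rw [if_pos (h2.mpr hag), if_pos hag]; ring
  · rw [if_neg (fun c => hag (h2.mp c)), if_neg hag]; ring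

lemma aux_gram_nondeg (q : ℂ) (hq : q ≠ 0) (p : ℕ)
    (hqm : q ^ ((p + 1 : ℕ) : ℤ) = -1)
    (hchar : ∀ r : ℤ, q ^ r = 1 ↔ (2 * ((p : ℤ) + 1)) ∣ r)
    (α γ : ℤ) (hα1 : 1 ≤ α) (hα2 : α ≤ p) (hγ1 : 1 ≤ γ) (hγ2 : γ ≤ p) :
    ∑ j ∈ Finset.range p,
      (q ^ (α * ((j : ℤ) + 1)) - q ^ (-(α * ((j : ℤ) + 1)))) *
        (q ^ (γ * ((j : ℤ) + 1)) - q ^ (-(γ * ((j : ℤ) + 1))))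
      = if α = γ then -(2 * ((p : ℂ) + 1)) else 0 := by
  have step : ∀ j : ℕ,
      (q ^ (α * ((j : ℤ) + 1)) - q ^ (-(α * ((j : ℤ) + 1)))) *
        (q ^ (γ * ((j : ℤ) + 1)) - q ^ (-(γ * ((j : ℤ) + 1))))
      = (q ^ ((α + γ) * ((j : ℤ) + 1)) + q ^ (-((α + γ) * ((j : ℤ) + 1))))
        - (q ^ ((α - γ) * ((j : ℤ) + 1)) + q ^ (-((α - γ) * ((j : ℤ) + 1)))) := by
    intro j
    rw [aux_expand q hq]
    congr 3 <;> ring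
  rw [Finset.sum_congr rfl fun j _ => step j, Finset.sum_sub_distrib,
    aux_Tnondeg q hq p hqm (α + γ), aux_Tnondeg q hq p hqm (α - γ)]
  have hpar : ((-1 : ℂ)) ^ (α + γ) = (-1) ^ (α - γ) := by
    have hdec : α + γ = (α - γ) + 2 * γ := by ring
    rw [hdec, zpow_add₀ (by norm_num : (-1 : ℂ) ≠ 0), zpow_mul]
    norm_num
  have h1 : ¬ (q ^ (α + γ) = 1) := by
    rw [hchar]; intro hd
    have := Int.le_of_dvd (by omega) hd
    omega
  have h2 : (q ^ (α - γ) = 1) ↔ α = γ := by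
    rw [hchar]
    constructor
    · intro hd
      by_contra hne
      have h0 : 0 < |α - γ| := abs_pos.mpr (sub_ne_zero.mpr hne)
      have hle := Int.le_of_dvd h0 ((dvd_abs _ _).mpr hd)
      have habs : |α - γ| ≤ (p : ℤ) - 1 := abs_le.mpr ⟨by omega, by omega⟩
      omega
    · intro h; simp [h]
  rw [if_neg h1, hpar]
  by_cases hag : α = γ
  · rw [if_pos (h2.mpr hag), if_pos hag]; push_cast; ring
  · rw [if_neg (fun c => hag (h2.mp c)), if_neg hag]; ring

theorem stmt9 (k : ℕ) (hk : 1 ≤ k) (ℓ : ℤ) (hl : Int.gcd ℓ ((k : ℤ) + 2) = 1)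
    (s : ℂ)
    (hs : s = Complex.I * Complex.exp ((Real.pi : ℂ) * Complex.I * (ℓ : ℂ) / (2 * ((k : ℂ) + 2))))
    (S : Matrix (Fin (k + 1)) (Fin (k + 1)) ℂ)
    (hS : ∀ a b : Fin (k + 1), S a b =
      (-1) ^ ((a : ℕ) + (b : ℕ)) *
        ((s ^ (2 * (((a : ℕ) + 1) * ((b : ℕ) + 1) : ℤ)) -
            s ^ (-(2 * (((a : ℕ) + 1) * ((b : ℕ) + 1) : ℤ)))) /
          (s ^ (2 : ℤ) - s ^ (-2 : ℤ)))) :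
    (Odd k ∧ Odd ℓ → S.rank = (k + 1) / 2) ∧
      (¬ (Odd k ∧ Odd ℓ) → S.rank = k + 1 ∧ IsUnit S) := by
  obtain ⟨hs0, hqm0, hq2r⟩ := aux_q_setup k ℓ hl s hs
  set q : ℂ := s ^ (2 : ℤ) with hqdef
  have hqq : q = s ^ 2 := by
    rw [hqdef]; norm_cast
  have hq0 : q ≠ 0 := by
    rw [hqq]; exact pow_ne_zero _ hs0
  set d : ℂ := q - q⁻¹ with hddef
  -- entry rewrite
  have hpow : ∀ n : ℤ, s ^ (2 * n) = q ^ n := by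
    intro n; rw [zpow_mul]
  have hentry : ∀ a b : Fin (k + 1), S a b =
      (-1) ^ ((a : ℕ) + (b : ℕ)) *
        ((q ^ ((((a : ℕ) : ℤ) + 1) * (((b : ℕ) : ℤ) + 1)) -
          q ^ (-((((a : ℕ) : ℤ) + 1) * (((b : ℕ) : ℤ) + 1)))) / d) := by
    intro a b
    rw [hS a b]
    rw [show s ^ (-2 : ℤ) = q⁻¹ by rw [zpow_neg, ← hqdef]]
    rw [show (-(2 * ((((a : ℕ) : ℤ) + 1) * (((b : ℕ) : ℤ) + 1))))
        = 2 * (-((((a : ℕ) : ℤ) + 1) * (((b : ℕ) : ℤ) + 1))) by ring]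
    rw [hpow, hpow, ← hddef]
  -- d ≠ 0
  have hd0 : d ≠ 0 := by
    intro h
    have hqinv : q = q⁻¹ := by rwa [hddef, sub_eq_zero] at h
    have hq1 : (s ^ 2) ^ (2 * (1 : ℤ)) = 1 := by
      rw [← hqq, mul_one, show (2 : ℤ) = 1 + 1 by norm_num, zpow_add₀ hq0, zpow_one]
      nth_rewrite 2 [hqinv]
      exact mul_inv_cancel₀ hq0
    have := Int.le_of_dvd one_pos ((hq2r 1).mp hq1)
    omega
  rw [← hqq] at hqm0
  clear_value q d
  -- sign lemma
  have hsgn : ∀ x y z : ℕ, ((-1 : ℂ)) ^ (x + y) * (-1) ^ (y + z) = (-1) ^ (x + z) := by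
    intro x y z
    rw [← pow_add, show x + y + (y + z) = x + z + 2 * y by omega, pow_add, pow_mul]
    norm_num
  have hkne : ((k : ℂ) + 2) ≠ 0 := by
    have h1 : ((k + 2 : ℕ) : ℂ) ≠ 0 := Nat.cast_ne_zero.mpr (by omega)
    intro h
    apply h1
    push_cast
    linear_combination h
  constructor
  · -- degenerate case
    rintro ⟨hko, hlo⟩
    have hqm : q ^ ((k + 2 : ℕ) : ℤ) = 1 := by
      rw [hqm0, hko.neg_one_pow, hlo.neg_one_zpow]
      norm_num
    have hchar : ∀ r : ℤ, q ^ r = 1 ↔ ((k + 2 : ℕ) : ℤ) ∣ r := by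
      intro r
      constructor
      · intro h1
        have h2 : (s ^ 2) ^ (2 * r) = 1 := by
          rw [← hqq, mul_comm, zpow_mul, h1, one_zpow]
        obtain ⟨t, ht⟩ := (hq2r r).mp h2
        exact ⟨t, by rw [ht]; push_cast; ring⟩
      · rintro ⟨t, rfl⟩
        rw [zpow_mul, hqm, one_zpow]
    set h' : ℕ := (k + 1) / 2 with hh'
    have hkk : k + 2 = 2 * h' + 1 := by obtain ⟨t, ht⟩ := hko; omega
    set N : ℕ → ℕ → ℂ := fun x y =>
      q ^ (((x : ℤ) + 1) * ((y : ℤ) + 1)) - q ^ (-(((x : ℤ) + 1) * ((y : ℤ) + 1))) with hN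
    have hentry' : ∀ a b : Fin (k + 1),
        S a b = (-1) ^ ((a : ℕ) + (b : ℕ)) * (N (a : ℕ) (b : ℕ) / d) := hentry
    have hNsymm : ∀ x y : ℕ, N x y = N y x := by
      intro x y
      simp only [hN]
      rw [mul_comm ((x : ℤ) + 1) ((y : ℤ) + 1)]
    -- row duplication
    have hrowdup : ∀ (a b : Fin (k + 1)), h' ≤ (a : ℕ) →
        S ⟨k - (a : ℕ), by omega⟩ b = S a b := by
      intro a b ha
      have hA := a.isLt
      rw [hentry' ⟨k - (a : ℕ), by omega⟩ b, hentry' a b]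
      simp only [Fin.val_mk]
      have hNeq : N (k - (a : ℕ)) (b : ℕ) = -N (a : ℕ) (b : ℕ) := by
        simp only [hN]
        have hc : (((k - (a : ℕ) : ℕ)) : ℤ) = (k : ℤ) - (a : ℕ) := by omega
        rw [hc]
        have he : ((k : ℤ) - (a : ℕ) + 1) * (((b : ℕ) : ℤ) + 1)
            = ((k + 2 : ℕ) : ℤ) * (((b : ℕ) : ℤ) + 1)
              + -((((a : ℕ) : ℤ) + 1) * (((b : ℕ) : ℤ) + 1)) := by
          push_cast; ring
        have he2 : -(((k : ℤ) - (a : ℕ) + 1) * (((b : ℕ) : ℤ) + 1))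
            = -(((k + 2 : ℕ) : ℤ) * (((b : ℕ) : ℤ) + 1))
              + ((((a : ℕ) : ℤ) + 1) * (((b : ℕ) : ℤ) + 1)) := by
          push_cast; ring
        have h3 : q ^ (((k + 2 : ℕ) : ℤ) * (((b : ℕ) : ℤ) + 1)) = 1 := by
          rw [zpow_mul, hqm, one_zpow]
        have h4 : q ^ (-(((k + 2 : ℕ) : ℤ) * (((b : ℕ) : ℤ) + 1))
              + ((((a : ℕ) : ℤ) + 1) * (((b : ℕ) : ℤ) + 1)))
            = q ^ ((((a : ℕ) : ℤ) + 1) * (((b : ℕ) : ℤ) + 1)) := by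
          rw [zpow_add₀ hq0, zpow_neg, h3, inv_one, one_mul]
        have h5 : q ^ ((((k + 2 : ℕ) : ℤ)) * (((b : ℕ) : ℤ) + 1)
              + -((((a : ℕ) : ℤ) + 1) * (((b : ℕ) : ℤ) + 1)))
            = q ^ (-((((a : ℕ) : ℤ) + 1) * (((b : ℕ) : ℤ) + 1))) := by
          rw [zpow_add₀ hq0, h3, one_mul]
        rw [he2, he, h5, h4]
        ring
      have hsgneq : ((-1 : ℂ)) ^ ((k - (a : ℕ)) + (b : ℕ)) = -(-1) ^ ((a : ℕ) + (b : ℕ)) := by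
        rcases Nat.even_or_odd ((a : ℕ) + (b : ℕ)) with he | ho
        · have hodd2 : Odd ((k - (a : ℕ)) + (b : ℕ)) := by
            rw [Nat.odd_iff]
            rw [Nat.even_iff] at he
            obtain ⟨t, ht⟩ := hko
            omega
          rw [hodd2.neg_one_pow, he.neg_one_pow]
        · have hev2 : Even ((k - (a : ℕ)) + (b : ℕ)) := by
            rw [Nat.even_iff]
            rw [Nat.odd_iff] at ho
            obtain ⟨t, ht⟩ := hko
            omega
          rw [hev2.neg_one_pow, ho.neg_one_pow]
          norm_num
      rw [hNeq, hsgneq]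
      ring
    -- selection matrices
    set f : Fin h' → Fin (k + 1) := fun j => ⟨(j : ℕ), by omega⟩ with hf
    have hfv : ∀ j : Fin h', ((f j) : ℕ) = (j : ℕ) := fun j => rfl
    set Pr : Matrix (Fin (k + 1)) (Fin h') ℂ :=
      Matrix.of (fun a j => if a = f j then 1 else 0) with hPr
    set Pl : Matrix (Fin h') (Fin (k + 1)) ℂ :=
      Matrix.of (fun j a => if a = f j then 1 else 0) with hPl
    have hB : ∀ (M : Matrix (Fin (k + 1)) (Fin (k + 1)) ℂ) (a : Fin (k + 1)) (j : Fin h'),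
        (M * Pr) a j = M a (f j) := by
      intro M a j
      rw [Matrix.mul_apply]
      simp [hPr]
    have hL : ∀ (m : ℕ) (M : Matrix (Fin (k + 1)) (Fin m) ℂ) (j : Fin h') (b : Fin m),
        (Pl * M) j b = M (f j) b := by
      intro m M j b
      rw [Matrix.mul_apply]
      simp [hPl]
    set S' : Matrix (Fin h') (Fin h') ℂ := Pl * (S * Pr) with hS'
    have hS'e : ∀ j j' : Fin h', S' j j' = S (f j) (f j') := by
      intro j j'
      rw [hS', hL, hB]
    -- S' * S' = scalar
    have hSS' : S' * S' = (-((k : ℂ) + 2) / d ^ 2) • (1 : Matrix (Fin h') (Fin h') ℂ) := by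
      ext a c
      rw [Matrix.mul_apply, Matrix.smul_apply, Matrix.one_apply, smul_eq_mul, mul_ite,
        mul_one, mul_zero]
      have hstep : ∀ b : Fin h', S' a b * S' b c
          = ((-1 : ℂ)) ^ ((a : ℕ) + (c : ℕ)) / d ^ 2 *
            (N (a : ℕ) (b : ℕ) * N (c : ℕ) (b : ℕ)) := by
        intro b
        rw [hS'e a b, hS'e b c, hentry' (f a) (f b), hentry' (f b) (f c)]
        simp only [hfv]
        rw [hNsymm (b : ℕ) (c : ℕ), ← hsgn (a : ℕ) (b : ℕ) (c : ℕ)]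
        ring
      rw [Finset.sum_congr rfl fun b _ => hstep b, ← Finset.mul_sum]
      rw [Fin.sum_univ_eq_sum_range (fun j => N (a : ℕ) j * N (c : ℕ) j) h']
      have hgram := aux_gram_deg q hq0 (k + 2) h' hkk hqm hchar
        (((a : ℕ) : ℤ) + 1) (((c : ℕ) : ℤ) + 1)
        (by omega) (by have := a.isLt; push_cast; omega)
        (by omega) (by have := c.isLt; push_cast; omega)
      simp only [hN]
      rw [hgram]
      by_cases hac : a = c
      · subst hac
        rw [if_pos rfl, if_pos rfl]
        have h1 : ((-1 : ℂ)) ^ ((a : ℕ) + (a : ℕ)) = 1 := by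
          rw [← two_mul, pow_mul]; norm_num
        rw [h1]
        push_cast
        ring
      · rw [if_neg, if_neg hac]
        · ring
        · intro hcon
          exact hac (Fin.ext (by omega))
    have hcne : (-((k : ℂ) + 2) / d ^ 2) ≠ 0 := by
      apply div_ne_zero
      · intro h
        apply hkne
        linear_combination -h
      · exact pow_ne_zero _ hd0
    have hdet : S'.det * S'.det = (-((k : ℂ) + 2) / d ^ 2) ^ h' := by
      rw [← Matrix.det_mul, hSS', Matrix.det_smul, Matrix.det_one, mul_one, Fintype.card_fin]
    have hdet0 : S'.det ≠ 0 := by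
      intro h
      rw [h, mul_zero] at hdet
      exact (pow_ne_zero _ hcne) hdet.symm
    have hunit' : IsUnit S' := (Matrix.isUnit_iff_isUnit_det S').mpr (isUnit_iff_ne_zero.mpr hdet0)
    have hrank' : S'.rank = h' := by
      rw [Matrix.rank_of_isUnit S' hunit', Fintype.card_fin]
    have hlow : h' ≤ S.rank := by
      calc h' = S'.rank := hrank'.symm
        _ ≤ (S * Pr).rank := by rw [hS']; exact Matrix.rank_mul_le_right Pl (S * Pr)
        _ ≤ S.rank := Matrix.rank_mul_le_left S Pr
    -- upper bound
    set fold : Fin (k + 1) → Fin h' := fun a =>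
      if hc : (a : ℕ) < h' then ⟨(a : ℕ), hc⟩ else ⟨k - (a : ℕ), by omega⟩ with hfold
    set Pdup : Matrix (Fin (k + 1)) (Fin h') ℂ :=
      Matrix.of (fun a j => if j = fold a then 1 else 0) with hPdup
    have hdupB : ∀ (a : Fin (k + 1)) (b : Fin (k + 1)),
        (Pdup * (Pl * S)) a b = (Pl * S) (fold a) b := by
      intro a b
      rw [Matrix.mul_apply]
      simp [hPdup]
    have hSfactor : S = Pdup * (Pl * S) := by
      ext a b
      rw [hdupB, hL]
      by_cases hc : (a : ℕ) < h'
      · have hfa : f (fold a) = a := by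
          apply Fin.ext
          simp [hf, hfold, hc]
        rw [hfa]
      · have hfa : f (fold a) = ⟨k - (a : ℕ), by omega⟩ := by
          apply Fin.ext
          simp [hf, hfold, hc]
        rw [hfa, hrowdup a b (by omega)]
    have hup : S.rank ≤ h' := by
      calc S.rank = (Pdup * (Pl * S)).rank := by rw [← hSfactor]
        _ ≤ (Pl * S).rank := Matrix.rank_mul_le_right _ _
        _ ≤ Fintype.card (Fin h') := Matrix.rank_le_card_height _
        _ = h' := Fintype.card_fin _
    omega
  · -- nondegenerate case
    intro hodd
    have hlk : ¬ (Even ℓ ∧ Even (k + 2)) := by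
      rintro ⟨h1, h2⟩
      have d1 : (2 : ℤ) ∣ ℓ := h1.two_dvd
      have d2 : (2 : ℤ) ∣ ((k : ℤ) + 2) := by
        obtain ⟨t, ht⟩ := h2
        exact ⟨(t : ℤ), by push_cast; omega⟩
      have := Int.dvd_gcd d1 d2
      rw [hl] at this
      norm_num at this
    have hqm : q ^ (((k + 1) + 1 : ℕ) : ℤ) = -1 := by
      rw [show (k + 1) + 1 = k + 2 from rfl, hqm0]
      rcases Nat.even_or_odd k with hke | hko
      · have hlo : Odd ℓ := by
          rcases Int.even_or_odd ℓ with hle | hlo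
          · exact absurd ⟨hle, by exact (Nat.even_add ..).mpr (by simp [hke]) ⟩ hlk
          · exact hlo
        rw [hke.neg_one_pow, hlo.neg_one_zpow]
        norm_num
      · have hle : Even ℓ := by
          rcases Int.even_or_odd ℓ with hle | hlo
          · exact hle
          · exact absurd ⟨hko, hlo⟩ hodd
        rw [hko.neg_one_pow, hle.neg_one_zpow]
        norm_num
    have hchar : ∀ r : ℤ, q ^ r = 1 ↔ (2 * (((k + 1 : ℕ) : ℤ) + 1)) ∣ r := by
      intro r
      constructor
      · intro h1
        have h2 : (s ^ 2) ^ (2 * r) = 1 := by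
          rw [← hqq, mul_comm, zpow_mul, h1, one_zpow]
        obtain ⟨t, ht⟩ := (hq2r r).mp h2
        have h3 : ((-1 : ℂ)) ^ t = 1 := by
          calc ((-1 : ℂ)) ^ t = (q ^ (((k + 1) + 1 : ℕ) : ℤ)) ^ t := by rw [hqm]
            _ = q ^ ((((k + 1) + 1 : ℕ) : ℤ) * t) := (zpow_mul q _ t).symm
            _ = q ^ r := by rw [ht]; congr 1
            _ = 1 := h1
        rcases Int.even_or_odd t with he | ho
        · obtain ⟨u, hu⟩ := he
          exact ⟨u, by rw [ht, hu]; push_cast; ring⟩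
        · rw [ho.neg_one_zpow] at h3; norm_num at h3
      · rintro ⟨u, rfl⟩
        rw [show 2 * (((k + 1 : ℕ) : ℤ) + 1) * u = (((k + 1) + 1 : ℕ) : ℤ) * (2 * u) by
          push_cast; ring, zpow_mul, hqm, zpow_mul]
        norm_num
    set N : ℕ → ℕ → ℂ := fun x y =>
      q ^ (((x : ℤ) + 1) * ((y : ℤ) + 1)) - q ^ (-(((x : ℤ) + 1) * ((y : ℤ) + 1))) with hN
    have hentry' : ∀ a b : Fin (k + 1),
        S a b = (-1) ^ ((a : ℕ) + (b : ℕ)) * (N (a : ℕ) (b : ℕ) / d) := hentry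
    have hNsymm : ∀ x y : ℕ, N x y = N y x := by
      intro x y
      simp only [hN]
      rw [mul_comm ((x : ℤ) + 1) ((y : ℤ) + 1)]
    have hSS : S * S = (-(2 * ((k : ℂ) + 2)) / d ^ 2) •
        (1 : Matrix (Fin (k + 1)) (Fin (k + 1)) ℂ) := by
      ext a c
      rw [Matrix.mul_apply, Matrix.smul_apply, Matrix.one_apply, smul_eq_mul, mul_ite,
        mul_one, mul_zero]
      have hstep : ∀ b : Fin (k + 1), S a b * S b c
          = ((-1 : ℂ)) ^ ((a : ℕ) + (c : ℕ)) / d ^ 2 *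
            (N (a : ℕ) (b : ℕ) * N (c : ℕ) (b : ℕ)) := by
        intro b
        rw [hentry' a b, hentry' b c, hNsymm (b : ℕ) (c : ℕ), ← hsgn (a : ℕ) (b : ℕ) (c : ℕ)]
        ring
      rw [Finset.sum_congr rfl fun b _ => hstep b, ← Finset.mul_sum]
      rw [Fin.sum_univ_eq_sum_range (fun j => N (a : ℕ) j * N (c : ℕ) j) (k + 1)]
      have hgram := aux_gram_nondeg q hq0 (k + 1) hqm hchar
        (((a : ℕ) : ℤ) + 1) (((c : ℕ) : ℤ) + 1)
        (by omega) (by have := a.isLt; push_cast; omega)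
        (by omega) (by have := c.isLt; push_cast; omega)
      simp only [hN]
      rw [hgram]
      by_cases hac : a = c
      · subst hac
        rw [if_pos rfl, if_pos rfl]
        have h1 : ((-1 : ℂ)) ^ ((a : ℕ) + (a : ℕ)) = 1 := by
          rw [← two_mul, pow_mul]; norm_num
        rw [h1]
        push_cast
        ring
      · rw [if_neg, if_neg hac]
        · ring
        · intro hcon
          exact hac (Fin.ext (by omega))
    have hcne : (-(2 * ((k : ℂ) + 2)) / d ^ 2) ≠ 0 := by
      apply div_ne_zero
      · intro h
        apply hkne
        linear_combination -h / 2
      · exact pow_ne_zero _ hd0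
    have hdet : S.det * S.det = (-(2 * ((k : ℂ) + 2)) / d ^ 2) ^ (k + 1) := by
      rw [← Matrix.det_mul, hSS, Matrix.det_smul, Matrix.det_one, mul_one, Fintype.card_fin]
    have hdet0 : S.det ≠ 0 := by
      intro h
      rw [h, mul_zero] at hdet
      exact (pow_ne_zero _ hcne) hdet.symm
    have hunit : IsUnit S := (Matrix.isUnit_iff_isUnit_det S).mpr (isUnit_iff_ne_zero.mpr hdet0)
    exact ⟨by rw [Matrix.rank_of_isUnit S hunit, Fintype.card_fin], hunit⟩
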